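/- Let r, k, ℓ be positive integers with ℓ < r, and let H be an r-uniform hypergraph admitting at least one (k,ℓ)-Kneser coloring. Then H has an ℓ-cover of cardinality at most k·C(r,ℓ), i.e., there exists a set C of at most k·C(r,ℓ) many ℓ-subsets of vertices such that every hyperedge of H contains some element of C. -/

import Mathlib

theorem stmt12 {V : Type*} [Fintype V] [DecidableEq V] (r k ℓ : ℕ)
    (hℓ : 1 ≤ ℓ) (hr : ℓ < r) (hk : 1 ≤ k)
    (E : Finset (Finset V)) (hE : ∀ e ∈ E, e.card = r)
    (hcol : ∃ Δ : {e // e ∈ E} → Fin k,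
      ∀ e f : {e // e ∈ E}, Δ e = Δ f → ℓ ≤ ((e : Finset V) ∩ (f : Finset V)).card) :
    ∃ C : Finset (Finset V), C.card ≤ k * r.choose ℓ ∧ (∀ t ∈ C, t.card = ℓ) ∧
      ∀ e ∈ E, ∃ t ∈ C, t ⊆ e := by
  obtain ⟨Δ, hΔ⟩ := hcol
  classical
  set F : Fin k → Finset (Finset V) := fun c =>
    if h : ∃ e, Δ e = c then ((Classical.choose h : {e // e ∈ E}) : Finset V).powersetCard ℓ
    else ∅ with hF
  refine ⟨Finset.univ.biUnion F, ?_, ?_, ?_⟩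
  · calc (Finset.univ.biUnion F).card ≤ ∑ c : Fin k, (F c).card :=
          Finset.card_biUnion_le
      _ ≤ ∑ _c : Fin k, r.choose ℓ := by
          refine Finset.sum_le_sum fun c _ => ?_
          rw [hF]; dsimp only
          split_ifs with h
          · rw [Finset.card_powersetCard, hE _ (Classical.choose h).2]
          · simp [Nat.zero_le]
      _ = k * r.choose ℓ := by simp [Finset.sum_const, mul_comm]
  · intro t ht
    simp only [Finset.mem_biUnion] at ht
    obtain ⟨c, _, htc⟩ := ht
    rw [hF] at htc; dsimp only at htc
    split_ifs at htc with h
    · exact (Finset.mem_powersetCard.mp htc).2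
    · simp at htc
  · intro e he
    set c := Δ ⟨e, he⟩
    have h : ∃ f, Δ f = c := ⟨⟨e, he⟩, rfl⟩
    have hint : ℓ ≤ (((Classical.choose h : {e // e ∈ E}) : Finset V) ∩ e).card :=
      hΔ _ ⟨e, he⟩ (Classical.choose_spec h)
    obtain ⟨t, hts, htc⟩ := Finset.exists_subset_card_eq hint
    refine ⟨t, ?_, fun x hx => (Finset.mem_inter.mp (hts hx)).2⟩
    refine Finset.mem_biUnion.mpr ⟨c, Finset.mem_univ _, ?_⟩
    rw [hF]; dsimp only
    rw [dif_pos h]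
    exact Finset.mem_powersetCard.mpr ⟨fun x hx => (Finset.mem_inter.mp (hts hx)).1, htc⟩
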